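/- Let G be a chordal d-sphere graph with d ≤ 3 and at least d+1 vertices. If G is d-connected, then G is globally d-sphere-rigid. -/

import Mathlib

open scoped RealInnerProductSpace

variable {V : Type*}

/-- A `d`-sphere graph realisation: adjacent vertices at distance exactly 1,
distinct non-adjacent vertices at distance greater than 1. -/
def IsSphereRealisation (d : ℕ) (G : SimpleGraph V) (ρ : V → EuclideanSpace ℝ (Fin d)) : Prop :=
  (∀ v w, G.Adj v w → dist (ρ v) (ρ w) = 1) ∧
  (∀ v w, v ≠ w → ¬ G.Adj v w → 1 < dist (ρ v) (ρ w))

/-- Two realisations are congruent if they differ by a Euclidean isometry of `ℝ^d`. -/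
def RealisationCongruent (d : ℕ) (ρ ρ' : V → EuclideanSpace ℝ (Fin d)) : Prop :=
  ∃ T : EuclideanSpace ℝ (Fin d) ≃ᵢ EuclideanSpace ℝ (Fin d), ρ' = ⇑T ∘ ρ

/-- `G` is a `d`-sphere graph if it admits some `d`-sphere realisation. -/
def IsSphereGraph (d : ℕ) (G : SimpleGraph V) : Prop :=
  ∃ ρ, IsSphereRealisation d G ρ

/-- `G` is `d`-sphere-rigid: it has only finitely many `d`-sphere realisations
modulo Euclidean isometries. -/
def SphereRigid (d : ℕ) (G : SimpleGraph V) : Prop :=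
  ∃ S : Set (V → EuclideanSpace ℝ (Fin d)), S.Finite ∧
    ∀ ρ, IsSphereRealisation d G ρ → ∃ ρ' ∈ S, RealisationCongruent d ρ ρ'

/-- `G` is globally `d`-sphere-rigid: any two `d`-sphere realisations are congruent. -/
def GloballySphereRigid (d : ℕ) (G : SimpleGraph V) : Prop :=
  ∀ ρ ρ', IsSphereRealisation d G ρ → IsSphereRealisation d G ρ' → RealisationCongruent d ρ ρ'

/-- A graph is `d`-connected if it has more than `d` vertices and deleting any
set of fewer than `d` vertices leaves it connected. -/
def IsDConnected (d : ℕ) [Fintype V] (G : SimpleGraph V) : Prop :=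
  d < Fintype.card V ∧
    ∀ S : Set V, S.ncard < d → (G.induce (Sᶜ : Set V)).Connected

/-- A `d`-tree: there is an ordering of the vertices such that the first `d+1`
vertices form a clique, and every later vertex is adjacent among earlier vertices
to exactly the vertices of a `d`-clique. -/
def IsDTree (d : ℕ) (G : SimpleGraph V) : Prop :=
  ∃ (n : ℕ) (e : Fin n ≃ V), d + 1 ≤ n ∧
    (∀ i j : Fin n, (i : ℕ) < d + 1 → (j : ℕ) < d + 1 → i ≠ j → G.Adj (e i) (e j)) ∧
    (∀ j : Fin n, d + 1 ≤ (j : ℕ) → ∃ S : Finset (Fin n),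
      S.card = d ∧ (∀ i ∈ S, (i : ℕ) < (j : ℕ)) ∧
      (∀ i ∈ S, ∀ k ∈ S, i ≠ k → G.Adj (e i) (e k)) ∧
      (∀ i : Fin n, (i : ℕ) < (j : ℕ) → (G.Adj (e i) (e j) ↔ i ∈ S)))

/-- A cycle (of length at least 4) has a chord: two vertices on the cycle are
adjacent in `G` but the edge between them is not an edge of the cycle. -/
def WalkHasChord {G : SimpleGraph V} {v : V} (w : G.Walk v v) : Prop :=
  ∃ a b, a ∈ w.support ∧ b ∈ w.support ∧ G.Adj a b ∧ s(a, b) ∉ w.edges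

/-- A graph is chordal if every cycle of length at least 4 has a chord. -/
def IsChordal (G : SimpleGraph V) : Prop :=
  ∀ (v : V) (w : G.Walk v v), w.IsCycle → 4 ≤ w.length → WalkHasChord w

/-- The clique number of `G` is at most `m`. -/
def CliqueNumAtMost (G : SimpleGraph V) (m : ℕ) : Prop :=
  ∀ (n : ℕ) (s : Finset V), G.IsNClique n s → n ≤ m

namespace Stmt12Aux

open SimpleGraph

variable {G : SimpleGraph V}

/-! ### Basic notions -/

def Simplicial (G : SimpleGraph V) (v : V) : Prop := (G.neighborSet v).Pairwise G.Adj

/-! ### Walks in induced subgraphs -/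

lemma reachable_induce_of_walk {s : Set V} {x y : V} (w : G.Walk x y)
    (hw : ∀ z ∈ w.support, z ∈ s) (hx : x ∈ s) (hy : y ∈ s) :
    (G.induce s).Reachable ⟨x, hx⟩ ⟨y, hy⟩ := by
  induction w with
  | nil => exact Reachable.refl _
  | @cons a c b h p ih =>
    have hc : c ∈ s := hw c (by simp)
    have hadj : (G.induce s).Adj ⟨a, hx⟩ ⟨c, hc⟩ := by simpa using h
    exact hadj.reachable.trans (ih (fun z hz => hw z (by simp [hz])) hc hy)

lemma exists_walk_of_induce_reachable {s : Set V} {x y : ↥s}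
    (h : (G.induce s).Reachable x y) :
    ∃ w : G.Walk x.1 y.1, ∀ z ∈ w.support, z ∈ s := by
  obtain ⟨w⟩ := h
  let f : G.induce s →g G := ⟨Subtype.val, fun {a b} h => h⟩
  refine ⟨w.map f, fun z hz => ?_⟩
  rw [Walk.support_map] at hz
  obtain ⟨z', _, rfl⟩ := List.mem_map.1 hz
  exact z'.2

/-! ### Avoid-connectivity and separators -/

def AvoidConn (G : SimpleGraph V) (S : Set V) (x y : V) : Prop :=
  ∃ w : G.Walk x y, ∀ z ∈ w.support, z ∉ S

lemma AvoidConn.notMem_left {S : Set V} {x y : V} (h : AvoidConn G S x y) : x ∉ S := by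
  obtain ⟨w, hw⟩ := h; exact hw x w.start_mem_support

lemma AvoidConn.rfl {S : Set V} {x : V} (hx : x ∉ S) : AvoidConn G S x x :=
  ⟨Walk.nil, by simpa using hx⟩

lemma AvoidConn.symm {S : Set V} {x y : V} (h : AvoidConn G S x y) : AvoidConn G S y x := by
  obtain ⟨w, hw⟩ := h
  exact ⟨w.reverse, by simpa [Walk.support_reverse] using hw⟩

lemma AvoidConn.trans {S : Set V} {x y z : V} (h : AvoidConn G S x y)
    (h' : AvoidConn G S y z) : AvoidConn G S x z := by
  obtain ⟨w, hw⟩ := h; obtain ⟨w', hw'⟩ := h'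
  refine ⟨w.append w', fun u hu => ?_⟩
  rcases (Walk.mem_support_append_iff _ _).1 hu with h | h
  exacts [hw u h, hw' u h]

lemma AvoidConn.adj {S : Set V} {x y z : V} (h : AvoidConn G S x y)
    (hadj : G.Adj y z) (hz : z ∉ S) : AvoidConn G S x z :=
  h.trans ⟨hadj.toWalk, by simpa [hz] using h.symm.notMem_left⟩

lemma AvoidConn.of_mem_support [DecidableEq V] {S : Set V} {x y z : V} (w : G.Walk x y)
    (hw : ∀ u ∈ w.support, u ∉ S) (hz : z ∈ w.support) : AvoidConn G S x z :=
  ⟨w.takeUntil z hz, fun a ha => hw a (w.support_takeUntil_subset hz ha)⟩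

def Sep (G : SimpleGraph V) (a b : V) (S : Set V) : Prop :=
  a ∉ S ∧ b ∉ S ∧ ¬ AvoidConn G S a b

lemma sep_compl {a b : V} (hab : a ≠ b) (hnadj : ¬ G.Adj a b) :
    Sep G a b (({a, b} : Set V)ᶜ) := by
  refine ⟨by simp, by simp, ?_⟩
  rintro ⟨w, hw⟩
  cases w with
  | nil => exact hab rfl
  | @cons _ c _ h p =>
    have hc := hw c (by simp)
    rw [Set.notMem_compl_iff] at hc
    rcases hc with rfl | rfl
    · exact h.ne rfl
    · exact hnadj h

lemma exists_min_sep [Fintype V] {a b : V} (hab : a ≠ b) (hnadj : ¬ G.Adj a b) :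
    ∃ S, Sep G a b S ∧ ∀ S', Sep G a b S' → S.ncard ≤ S'.ncard := by
  have hP : {n | ∃ S, Sep G a b S ∧ S.ncard = n}.Nonempty :=
    ⟨_, _, sep_compl hab hnadj, rfl⟩
  obtain ⟨S, hS, hcard⟩ := Nat.sInf_mem hP
  exact ⟨S, hS, fun S' hS' => hcard ▸ Nat.sInf_le ⟨S', hS', rfl⟩⟩

lemma sep_min_neighbor [Fintype V] {a b : V} {S : Set V} (hS : Sep G a b S)
    (hmin : ∀ S', Sep G a b S' → S.ncard ≤ S'.ncard) {s : V} (hs : s ∈ S) :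
    ∃ x, AvoidConn G S x a ∧ G.Adj s x := by
  classical
  by_contra hno
  push_neg at hno
  have hsep : Sep G a b (S \ {s}) := by
    refine ⟨fun h => hS.1 h.1, fun h => hS.2.1 h.1, ?_⟩
    rintro ⟨w, hw⟩
    by_cases hsw : s ∈ w.support
    · have h1 : (w.takeUntil s hsw).support.count s = 1 :=
        w.count_support_takeUntil_eq_one hsw
      cases hrev : (w.takeUntil s hsw).reverse with
      | nil => exact hS.1 hs
      | @cons _ c _ hadj p =>
        have hsup : (w.takeUntil s hsw).support.reverse = s :: p.support := by
          rw [← Walk.support_reverse, hrev, Walk.support_cons]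
        have hcount : (s :: p.support).count s = 1 := by
          rw [← hsup, List.count_reverse]; exact h1
        have hsnp : s ∉ p.support := by
          rw [List.count_cons_self] at hcount
          exact List.count_eq_zero.mp (by omega)
        have hpS : ∀ z ∈ p.support, z ∉ S := by
          intro z hz hzS
          have hzw : z ∈ w.support := by
            apply w.support_takeUntil_subset hsw
            have : z ∈ (w.takeUntil s hsw).support.reverse := by
              rw [hsup]; exact List.mem_cons_of_mem _ hz
            simpa using this
          exact hw z hzw ⟨hzS, by rintro rfl; exact hsnp hz⟩
        exact hno c ⟨p, hpS⟩ hadj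
    · refine hS.2.2 ⟨w, fun z hz hzS => ?_⟩
      exact hw z hz ⟨hzS, by rintro rfl; exact hsw hz⟩
  have hlt : (S \ {s}).ncard < S.ncard :=
    Set.ncard_diff_singleton_lt_of_mem hs (Set.toFinite _)
  exact absurd (hmin _ hsep) (by omega)

/-! ### Shortest induced walks -/

lemma two_le_length_of_not_adj {x y : V} (hxy : x ≠ y) (hnadj : ¬ G.Adj x y)
    (w : G.Walk x y) : 2 ≤ w.length := by
  cases w with
  | nil => exact absurd rfl hxy
  | cons h p =>
    cases p with
    | nil => exact absurd h hnadj
    | cons h2 p2 => simp [Walk.length_cons]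

lemma edge_mem_of_length_eq_one {x y : V} (w : G.Walk x y)
    (hlen : w.length = 1) : s(x, y) ∈ w.edges := by
  cases w with
  | nil => simp at hlen
  | @cons _ c _ h p =>
    have hc : c = y := Walk.eq_of_length_eq_zero (by simpa using hlen)
    subst hc
    simp

lemma exists_induced_walk {x y : V} (T : Set V) (hxy : x ≠ y) (hnadj : ¬ G.Adj x y)
    (h : ∃ w : G.Walk x y, ∀ z ∈ w.support, z ∈ T) :
    ∃ w : G.Walk x y, w.IsPath ∧ (∀ z ∈ w.support, z ∈ T) ∧
      ∀ a b, a ∈ w.support → b ∈ w.support → G.Adj a b → s(a, b) ∈ w.edges := by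
  classical
  have hP : {n | ∃ w : G.Walk x y, (∀ z ∈ w.support, z ∈ T) ∧ w.length = n}.Nonempty := by
    obtain ⟨w, hw⟩ := h; exact ⟨w.length, w, hw, rfl⟩
  obtain ⟨w0, hw0T, hw0len⟩ := Nat.sInf_mem hP
  have hmin : ∀ w' : G.Walk x y, (∀ z ∈ w'.support, z ∈ T) →
      sInf {n | ∃ w : G.Walk x y, (∀ z ∈ w.support, z ∈ T) ∧ w.length = n} ≤ w'.length :=
    fun w' h' => Nat.sInf_le ⟨w', h', rfl⟩
  set N := sInf {n | ∃ w : G.Walk x y, (∀ z ∈ w.support, z ∈ T) ∧ w.length = n} with hN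
  set w := w0.bypass with hwdef
  have hwT : ∀ z ∈ w.support, z ∈ T := fun z hz => hw0T z (w0.support_bypass_subset hz)
  have hblen : w.length = N :=
    le_antisymm (hw0len ▸ w0.length_bypass_le) (hmin _ hwT)
  refine ⟨w, w0.bypass_isPath, hwT, ?_⟩
  intro a b ha hb hadj
  by_contra hne
  have hsplit := w.take_spec ha
  have hbsplit : b ∈ (w.takeUntil a ha).support ∨ b ∈ (w.dropUntil a ha).support := by
    rw [← Walk.mem_support_append_iff, hsplit]; exact hb
  have hlen : (w.takeUntil a ha).length + (w.dropUntil a ha).length = N := by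
    rw [← Walk.length_append, hsplit, hblen]
  rcases hbsplit with hbta | hbda
  · set t := w.takeUntil a ha with hts
    have hlen2 : (t.takeUntil b hbta).length + (t.dropUntil b hbta).length = t.length := by
      rw [← Walk.length_append, t.take_spec hbta]
    have ht2 : 2 ≤ (t.dropUntil b hbta).length := by
      by_contra h2
      push_neg at h2
      interval_cases hl : (t.dropUntil b hbta).length
      · exact hadj.ne (Walk.eq_of_length_eq_zero hl).symm
      · have : s(b, a) ∈ (t.dropUntil b hbta).edges := edge_mem_of_length_eq_one _ hl
        have : s(b, a) ∈ w.edges :=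
          w.edges_takeUntil_subset ha (t.edges_dropUntil_subset hbta this)
        rw [Sym2.eq_swap] at this
        exact hne this
    have hnewT : ∀ z ∈ ((t.takeUntil b hbta).append
        (Walk.cons hadj.symm (w.dropUntil a ha))).support, z ∈ T := by
      intro z hz
      rcases (Walk.mem_support_append_iff _ _).1 hz with hz | hz
      · exact hwT z (w.support_takeUntil_subset ha (t.support_takeUntil_subset hbta hz))
      · rw [Walk.support_cons] at hz
        rcases List.mem_cons.1 hz with rfl | hz
        · exact hwT _ hb
        · exact hwT z (w.support_dropUntil_subset ha hz)
    have := hmin _ hnewT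
    rw [Walk.length_append, Walk.length_cons] at this
    omega
  · set dr := w.dropUntil a ha with hds
    have hlen2 : (dr.takeUntil b hbda).length + (dr.dropUntil b hbda).length = dr.length := by
      rw [← Walk.length_append, dr.take_spec hbda]
    have ht2 : 2 ≤ (dr.takeUntil b hbda).length := by
      by_contra h2
      push_neg at h2
      interval_cases hl : (dr.takeUntil b hbda).length
      · exact hadj.ne (Walk.eq_of_length_eq_zero hl)
      · have : s(a, b) ∈ (dr.takeUntil b hbda).edges := edge_mem_of_length_eq_one _ hl
        exact hne (w.edges_dropUntil_subset ha (dr.edges_takeUntil_subset hbda this))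
    have hnewT : ∀ z ∈ ((w.takeUntil a ha).append
        (Walk.cons hadj (dr.dropUntil b hbda))).support, z ∈ T := by
      intro z hz
      rcases (Walk.mem_support_append_iff _ _).1 hz with hz | hz
      · exact hwT z (w.support_takeUntil_subset ha hz)
      · rw [Walk.support_cons] at hz
        rcases List.mem_cons.1 hz with rfl | hz
        · exact hwT _ ha
        · exact hwT z (w.support_dropUntil_subset ha (dr.support_dropUntil_subset hbda hz))
    have := hmin _ hnewT
    rw [Walk.length_append, Walk.length_cons] at this
    omega

/-! ### Minimal separators are cliques, and Dirac's theorem -/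

lemma minsep_clique [Fintype V] (hch : IsChordal G) {a b : V} (hab : a ≠ b)
    (hnadj : ¬ G.Adj a b) {S : Set V} (hS : Sep G a b S)
    (hmin : ∀ S', Sep G a b S' → S.ncard ≤ S'.ncard) :
    S.Pairwise G.Adj := by
  classical
  intro s hs t ht hst
  by_contra hnst
  set A : Set V := {x | AvoidConn G S x a} with hA
  set B : Set V := {x | AvoidConn G S x b} with hB
  have hAS : ∀ x ∈ A, x ∉ S := fun x hx => hx.notMem_left
  have hBS : ∀ x ∈ B, x ∉ S := fun x hx => hx.notMem_left
  have hAB : ∀ x, x ∈ A → x ∈ B → False := fun x hxA hxB => hS.2.2 (hxA.symm.trans hxB)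
  have hAclosed : ∀ x y, x ∈ A → G.Adj x y → y ∉ S → y ∈ A := fun x y hx hxy hy =>
    (hx.symm.adj hxy hy).symm
  obtain ⟨xs, hxsA, hsxs⟩ := sep_min_neighbor hS hmin hs
  obtain ⟨xt, hxtA, htxt⟩ := sep_min_neighbor hS hmin ht
  have hSb : Sep G b a S := ⟨hS.2.1, hS.1, fun h => hS.2.2 h.symm⟩
  have hminb : ∀ S', Sep G b a S' → S.ncard ≤ S'.ncard := fun S' h =>
    hmin S' ⟨h.2.1, h.1, fun hh => h.2.2 hh.symm⟩
  obtain ⟨ys, hysB, hsys⟩ := sep_min_neighbor hSb hminb hs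
  obtain ⟨yt, hytB, htyt⟩ := sep_min_neighbor hSb hminb ht
  have hwalkA : ∃ w : G.Walk s t, ∀ z ∈ w.support, z ∈ A ∪ {s, t} := by
    obtain ⟨w0, hw0⟩ := hxsA.trans hxtA.symm
    refine ⟨Walk.cons hsxs (w0.concat htxt.symm), fun z hz => ?_⟩
    rw [Walk.support_cons] at hz
    rcases List.mem_cons.1 hz with rfl | hz
    · exact Or.inr (by simp)
    · rw [Walk.support_concat, List.mem_append] at hz
      rcases hz with hz | hz
      · exact Or.inl ((AvoidConn.of_mem_support w0 hw0 hz).symm.trans hxsA)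
      · simp only [List.mem_singleton] at hz
        exact Or.inr (by simp [hz])
  obtain ⟨pA, hpApath, hpAsup, hpAind⟩ := exists_induced_walk (A ∪ {s, t}) hst hnst hwalkA
  have hwalkB : ∃ w : G.Walk t s, ∀ z ∈ w.support, z ∈ B ∪ {s, t} := by
    obtain ⟨w0, hw0⟩ := hytB.trans hysB.symm
    refine ⟨Walk.cons htyt (w0.concat hsys.symm), fun z hz => ?_⟩
    rw [Walk.support_cons] at hz
    rcases List.mem_cons.1 hz with rfl | hz
    · exact Or.inr (by simp)
    · rw [Walk.support_concat, List.mem_append] at hz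
      rcases hz with hz | hz
      · exact Or.inl ((AvoidConn.of_mem_support w0 hw0 hz).symm.trans hytB)
      · simp only [List.mem_singleton] at hz
        exact Or.inr (by simp [hz])
  obtain ⟨pB, hpBpath, hpBsup, hpBind⟩ := exists_induced_walk (B ∪ {s, t}) (Ne.symm hst)
    (fun h => hnst h.symm) hwalkB
  set c : G.Walk s s := pA.append pB with hc
  have hsA : s ∉ A := fun h => hAS s h hs
  have htA : t ∉ A := fun h => hAS t h ht
  have hsB : s ∉ B := fun h => hBS s h hs
  have htB : t ∉ B := fun h => hBS t h ht
  have hmemcA : ∀ e, e ∈ pA.edges → e ∈ c.edges := fun e he => by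
    rw [hc, Walk.edges_append]; exact List.mem_append_left _ he
  have hmemcB : ∀ e, e ∈ pB.edges → e ∈ c.edges := fun e he => by
    rw [hc, Walk.edges_append]; exact List.mem_append_right _ he
  have hedisj : List.Disjoint pA.edges pB.edges := by
    intro e heA heB
    induction e with
    | h u v =>
      have huA : u ∈ pA.support := pA.fst_mem_support_of_mem_edges heA
      have hvA : v ∈ pA.support := pA.snd_mem_support_of_mem_edges heA
      have huB : u ∈ pB.support := pB.fst_mem_support_of_mem_edges heB
      have hvB : v ∈ pB.support := pB.snd_mem_support_of_mem_edges heB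
      have hadjuv : G.Adj u v := pA.adj_of_mem_edges heA
      have key : ∀ w, w ∈ pA.support → w ∈ pB.support → w = s ∨ w = t := by
        intro w hwA hwB
        rcases hpAsup w hwA with h1 | h1
        · rcases hpBsup w hwB with h2 | h2
          · exact absurd h2 (fun h2 => hAB w h1 h2)
          · simpa using h2
        · simpa using h1
      rcases key u huA huB with rfl | rfl <;> rcases key v hvA hvB with rfl | rfl
      · exact hadjuv.ne rfl
      · exact hnst hadjuv
      · exact hnst hadjuv.symm
      · exact hadjuv.ne rfl
  have hedges : c.edges.Nodup := by
    rw [hc, Walk.edges_append]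
    exact List.Nodup.append hpApath.isTrail.edges_nodup hpBpath.isTrail.edges_nodup hedisj
  have hsupAnd := hpApath.support_nodup
  have hsupBnd := hpBpath.support_nodup
  have htailA : pA.support.tail.Nodup := by
    rw [pA.support_eq_cons] at hsupAnd; exact (List.nodup_cons.1 hsupAnd).2
  have htailB : pB.support.tail.Nodup := by
    rw [pB.support_eq_cons] at hsupBnd; exact (List.nodup_cons.1 hsupBnd).2
  have hsnotatailA : s ∉ pA.support.tail := by
    rw [pA.support_eq_cons] at hsupAnd; exact (List.nodup_cons.1 hsupAnd).1
  have htnotatailB : t ∉ pB.support.tail := by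
    rw [pB.support_eq_cons] at hsupBnd; exact (List.nodup_cons.1 hsupBnd).1
  have htailmemA : ∀ z ∈ pA.support.tail, z ∈ A ∨ z = t := by
    intro z hz
    have hzs : z ∈ pA.support := by
      rw [pA.support_eq_cons]; exact List.mem_cons_of_mem _ hz
    rcases hpAsup z hzs with h | h
    · exact Or.inl h
    · simp only [Set.mem_insert_iff, Set.mem_singleton_iff] at h
      rcases h with rfl | rfl
      · exact absurd hz hsnotatailA
      · exact Or.inr rfl
  have htailmemB : ∀ z ∈ pB.support.tail, z ∈ B ∨ z = s := by
    intro z hz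
    have hzs : z ∈ pB.support := by
      rw [pB.support_eq_cons]; exact List.mem_cons_of_mem _ hz
    rcases hpBsup z hzs with h | h
    · exact Or.inl h
    · simp only [Set.mem_insert_iff, Set.mem_singleton_iff] at h
      rcases h with rfl | rfl
      · exact Or.inr rfl
      · exact absurd hz htnotatailB
  have hdisj2 : List.Disjoint pA.support.tail pB.support.tail := by
    intro z hzA hzB
    rcases htailmemA z hzA with h1 | h1 <;> rcases htailmemB z hzB with h2 | h2
    · exact hAB z h1 h2
    · exact hsA (h2 ▸ h1)
    · exact htB (h1 ▸ h2)
    · exact hst (h2 ▸ h1)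
  have htailnodup : c.support.tail.Nodup := by
    rw [hc, Walk.tail_support_append]
    exact List.Nodup.append htailA htailB hdisj2
  have hlA : 2 ≤ pA.length := two_le_length_of_not_adj hst hnst pA
  have hlB : 2 ≤ pB.length := two_le_length_of_not_adj (Ne.symm hst) (fun h => hnst h.symm) pB
  have hclen : 4 ≤ c.length := by rw [hc, Walk.length_append]; omega
  have hcne : c ≠ Walk.nil := by
    intro h
    rw [h] at hclen; simp at hclen
  obtain ⟨u, v, hu, hv, huv, hne⟩ := hch s c ⟨⟨⟨hedges⟩, hcne⟩, htailnodup⟩ hclen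
  rw [hc, Walk.mem_support_append_iff] at hu hv
  have hstartA : s ∈ pA.support := pA.start_mem_support
  have hendA : t ∈ pA.support := pA.end_mem_support
  have hstartB : t ∈ pB.support := pB.start_mem_support
  have hendB : s ∈ pB.support := pB.end_mem_support
  by_cases huA : u ∈ pA.support <;> by_cases hvA : v ∈ pA.support
  · exact hne (hmemcA _ (hpAind u v huA hvA huv))
  · have hvB : v ∈ pB.support := hv.resolve_left hvA
    have hvBset : v ∈ B := by
      rcases hpBsup v hvB with h | h
      · exact h
      · exfalso
        simp only [Set.mem_insert_iff, Set.mem_singleton_iff] at h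
        rcases h with rfl | rfl
        · exact hvA hstartA
        · exact hvA hendA
    rcases hpAsup u huA with huAset | hust
    · exact hAB v (hAclosed u v huAset huv (hBS v hvBset)) hvBset
    · have huB : u ∈ pB.support := by
        simp only [Set.mem_insert_iff, Set.mem_singleton_iff] at hust
        rcases hust with rfl | rfl
        · exact hendB
        · exact hstartB
      exact hne (hmemcB _ (hpBind u v huB hvB huv))
  · have huB : u ∈ pB.support := hu.resolve_left huA
    have huBset : u ∈ B := by
      rcases hpBsup u huB with h | h
      · exact h
      · exfalso
        simp only [Set.mem_insert_iff, Set.mem_singleton_iff] at h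
        rcases h with rfl | rfl
        · exact huA hstartA
        · exact huA hendA
    rcases hpAsup v hvA with hvAset | hvst
    · exact hAB u (hAclosed v u hvAset huv.symm (hBS u huBset)) huBset
    · have hvB : v ∈ pB.support := by
        simp only [Set.mem_insert_iff, Set.mem_singleton_iff] at hvst
        rcases hvst with rfl | rfl
        · exact hendB
        · exact hstartB
      exact hne (hmemcB _ (hpBind u v huB hvB huv))
  · have huB : u ∈ pB.support := hu.resolve_left huA
    have hvB : v ∈ pB.support := hv.resolve_left hvA
    exact hne (hmemcB _ (hpBind u v huB hvB huv))

lemma isChordal_induce (hch : IsChordal G) (s : Set V) : IsChordal (G.induce s) := by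
  intro v w hcyc hlen
  let f : G.induce s →g G := ⟨Subtype.val, fun {a b} h => h⟩
  have hinj : Function.Injective f := Subtype.val_injective
  obtain ⟨A, B, hA, hB, hadj, hne⟩ := hch _ (w.map f)
    ((Walk.map_isCycle_iff_of_injective hinj).2 hcyc) (by simpa using hlen)
  rw [Walk.support_map] at hA hB
  obtain ⟨a', ha', rfl⟩ := List.mem_map.1 hA
  obtain ⟨b', hb', rfl⟩ := List.mem_map.1 hB
  refine ⟨a', b', ha', hb', hadj, fun hmem => hne ?_⟩
  rw [Walk.edges_map]
  exact List.mem_map.2 ⟨s(a', b'), hmem, rfl⟩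

lemma simplicial_of_induce {s : Set V} {x : V} (hx : x ∈ s)
    (hN : ∀ y, G.Adj x y → y ∈ s) (h : Simplicial (G.induce s) ⟨x, hx⟩) :
    Simplicial G x := by
  intro y hy z hz hyz
  have hys : y ∈ s := hN y hy
  have hzs : z ∈ s := hN z hz
  have hy' : (⟨y, hys⟩ : ↥s) ∈ (G.induce s).neighborSet ⟨x, hx⟩ := by simpa using hy
  have hz' : (⟨z, hzs⟩ : ↥s) ∈ (G.induce s).neighborSet ⟨x, hx⟩ := by simpa using hz
  exact h hy' hz' (fun hh => hyz (congrArg Subtype.val hh))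

set_option maxHeartbeats 1000000 in
theorem dirac_strong : ∀ (n : ℕ) (V : Type u) (_ : Fintype V) (G : SimpleGraph V),
    Fintype.card V = n → IsChordal G →
    (∀ x y : V, x ≠ y → G.Adj x y) ∨
      ∃ a b, a ≠ b ∧ ¬ G.Adj a b ∧ Simplicial G a ∧ Simplicial G b := by
  intro n
  induction n using Nat.strong_induction_on with
  | _ n ih =>
  intro V instV G hcard hch
  classical
  by_cases hcomp : ∀ x y : V, x ≠ y → G.Adj x y
  · exact Or.inl hcomp
  right
  push_neg at hcomp
  obtain ⟨a, b, hab, hnadj⟩ := hcomp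
  obtain ⟨S, hS, hmin⟩ := exists_min_sep hab hnadj
  have hclq := minsep_clique hch hab hnadj hS hmin
  set A : Set V := {x | AvoidConn G S x a} with hA
  set B : Set V := {x | AvoidConn G S x b} with hB
  have haA : a ∈ A := AvoidConn.rfl hS.1
  have hbB : b ∈ B := AvoidConn.rfl hS.2.1
  have hAB : ∀ x, x ∈ A → x ∈ B → False := fun x h1 h2 => hS.2.2 (h1.symm.trans h2)
  have hAclosed : ∀ x y, x ∈ A → G.Adj x y → y ∉ S → y ∈ A := fun x y hx hxy hy =>
    (hx.symm.adj hxy hy).symm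
  have hBclosed : ∀ x y, x ∈ B → G.Adj x y → y ∉ S → y ∈ B := fun x y hx hxy hy =>
    (hx.symm.adj hxy hy).symm
  have hside : ∀ (M : Set V) (c0 : V), c0 ∈ M →
      (∀ x y, x ∈ M → G.Adj x y → y ∉ S → y ∈ M) →
      (∀ x, x ∈ M → x ∉ S) →
      (∃ w, w ∉ M ∪ S) →
      ∃ x ∈ M, Simplicial G x := by
    intro M c0 hc0 hMclosed hMS hw
    obtain ⟨w, hwns⟩ := hw
    have hNsub : ∀ x ∈ M, ∀ y, G.Adj x y → y ∈ M ∪ S := by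
      intro x hx y hxy
      by_cases hyS : y ∈ S
      · exact Or.inr hyS
      · exact Or.inl (hMclosed x y hx hxy hyS)
    have hsub : Fintype.card ↥(M ∪ S) < n := by
      have h1 : Fintype.card ↥(M ∪ S) = (M ∪ S).ncard := by
        rw [← Nat.card_eq_fintype_card, Nat.card_coe_set_eq]
      have h2 : (M ∪ S) ⊂ Set.univ := (Set.subset_univ _).ssubset_of_ne
        (fun h => hwns (by rw [h]; trivial))
      have h3 := Set.ncard_lt_ncard h2 (Set.toFinite _)
      rw [Set.ncard_univ, Nat.card_eq_fintype_card, hcard] at h3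
      omega
    have hchM := isChordal_induce hch (M ∪ S)
    rcases ih _ hsub ↥(M ∪ S) inferInstance (G.induce (M ∪ S)) rfl hchM with hcompM | hex
    · refine ⟨c0, hc0, ?_⟩
      refine simplicial_of_induce (Or.inl hc0) (hNsub c0 hc0) ?_
      intro y hy z hz hyz
      exact hcompM y z hyz
    · obtain ⟨x, y, hxy, hnxy, hsx, hsy⟩ := hex
      have hxy' : (x : V) ≠ (y : V) := fun h => hxy (Subtype.ext h)
      have hnotboth : ¬((x : V) ∈ S ∧ (y : V) ∈ S) := by
        rintro ⟨h1, h2⟩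
        exact hnxy (hclq h1 h2 hxy')
      by_cases hxS : (x : V) ∈ S
      · have hyS : (y : V) ∉ S := fun h => hnotboth ⟨hxS, h⟩
        have hyM : (y : V) ∈ M := (y.2).resolve_right hyS
        exact ⟨y, hyM, simplicial_of_induce y.2 (hNsub _ hyM) hsy⟩
      · have hxM : (x : V) ∈ M := (x.2).resolve_right hxS
        exact ⟨x, hxM, simplicial_of_induce x.2 (hNsub _ hxM) hsx⟩
  have hbnot : b ∉ A ∪ S := by
    rintro (h | h)
    · exact hS.2.2 h.symm
    · exact hS.2.1 h
  have hanot : a ∉ B ∪ S := by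
    rintro (h | h)
    · exact hS.2.2 h
    · exact hS.1 h
  obtain ⟨xA, hxA, hsimA⟩ := hside A a haA hAclosed (fun x hx => hx.notMem_left) ⟨b, hbnot⟩
  obtain ⟨xB, hxB, hsimB⟩ := hside B b hbB hBclosed (fun x hx => hx.notMem_left) ⟨a, hanot⟩
  refine ⟨xA, xB, ?_, ?_, hsimA, hsimB⟩
  · rintro rfl; exact hAB _ hxA hxB
  · intro hadj
    exact hAB _ (hAclosed xA xB hxA hadj (fun h => (hxB.notMem_left) h)) hxB

theorem dirac_weak [Fintype V] [Nonempty V] (hch : IsChordal G) :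
    ∃ v, Simplicial G v := by
  rcases dirac_strong (Fintype.card V) V ‹_› G rfl hch with hcomp | ⟨a, _, _, _, hsa, _⟩
  · obtain ⟨v⟩ := ‹Nonempty V›
    exact ⟨v, fun y hy z hz hyz => hcomp y z hyz⟩
  · exact ⟨a, hsa⟩

/-! ### Degree facts from d-connectivity -/

lemma min_degree [Fintype V] {d : ℕ} (hconn : IsDConnected d G) (v : V) :
    d ≤ (G.neighborSet v).ncard := by
  by_contra hlt
  push_neg at hlt
  have hcon := hconn.2 _ hlt
  have hvmem : v ∈ (G.neighborSet v)ᶜ := by simp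
  have h2 : 1 < ((G.neighborSet v)ᶜ : Set V).ncard := by
    have h3 := Set.ncard_add_ncard_compl (G.neighborSet v)
    rw [Nat.card_eq_fintype_card] at h3
    have hd := hconn.1
    omega
  obtain ⟨w, hw, hwv⟩ := Set.exists_ne_of_one_lt_ncard h2 v
  obtain ⟨wk, hwk⟩ := exists_walk_of_induce_reachable (hcon ⟨v, hvmem⟩ ⟨w, hw⟩)
  cases wk with
  | nil => exact hwv rfl
  | @cons _ c _ h p =>
    have hc : c ∈ ((G.neighborSet v)ᶜ : Set V) := hwk c (by simp)
    exact hc h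

lemma complete_of_card_eq [Fintype V] {d : ℕ} (hconn : IsDConnected d G)
    (hcard : Fintype.card V = d + 1) : ∀ x y : V, x ≠ y → G.Adj x y := by
  intro x y hxy
  have hsub : G.neighborSet x ⊆ ({x} : Set V)ᶜ := fun z hz => by
    simp [(G.ne_of_adj hz).symm]
  have hc : (({x} : Set V)ᶜ).ncard = d := by
    have h3 := Set.ncard_add_ncard_compl ({x} : Set V)
    rw [Nat.card_eq_fintype_card] at h3
    simp only [Set.ncard_singleton] at h3
    omega
  have heq : G.neighborSet x = ({x} : Set V)ᶜ :=
    Set.eq_of_subset_of_ncard_le hsub (by rw [hc]; exact min_degree hconn x) (Set.toFinite _)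
  have hy : y ∈ ({x} : Set V)ᶜ := by simp [Ne.symm hxy]
  rw [← heq] at hy
  exact hy

lemma deg_eq_of_simplicial [Fintype V] {d : ℕ} (hconn : IsDConnected d G)
    (hclq : CliqueNumAtMost G (d + 1)) {v : V} (hv : Simplicial G v) :
    (G.neighborSet v).ncard = d := by
  classical
  have hle : (G.neighborSet v).ncard ≤ d := by
    have hcl : G.IsNClique ((G.neighborSet v).ncard + 1)
        (insert v (G.neighborSet v).toFinset) := by
      constructor
      · intro x hx y hy hxy
        simp only [Finset.coe_insert, Set.mem_insert_iff, Finset.mem_coe,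
          Set.mem_toFinset, SimpleGraph.mem_neighborSet] at hx hy
        rcases hx with rfl | hx <;> rcases hy with rfl | hy
        · exact absurd rfl hxy
        · exact hy
        · exact hx.symm
        · exact hv hx hy hxy
      · rw [Finset.card_insert_of_notMem (by simp), Set.toFinset_card,
          Set.ncard_eq_toFinset_card', Set.toFinset_card]
    have := hclq _ _ hcl
    omega
  exact le_antisymm hle (min_degree hconn v)

/-! ### Deleting a simplicial vertex -/

lemma walk_avoid {v : V} (hv : Simplicial G v) :
    ∀ (n : ℕ) {x y : V} (w : G.Walk x y), w.length = n → x ≠ v → y ≠ v →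
      ∃ w' : G.Walk x y, (∀ z ∈ w'.support, z ∈ w.support) ∧ v ∉ w'.support := by
  intro n
  induction n using Nat.strong_induction_on with
  | _ n ih =>
    intro x y w hlen hx hy
    cases w with
    | nil => exact ⟨Walk.nil, fun z hz => hz, by simpa using Ne.symm hx⟩
    | @cons _ c _ h p =>
      by_cases hc : c = v
      · subst hc
        cases p with
        | nil => exact absurd rfl hy
        | @cons _ c2 _ h2 q =>
          by_cases hc2 : c2 = x
          · subst hc2
            obtain ⟨w', hsub, hnv⟩ := ih q.length (by simp [Walk.length_cons] at hlen ⊢; omega)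
              q rfl hx hy
            refine ⟨w', fun z hz => ?_, hnv⟩
            simp only [Walk.support_cons, List.mem_cons]
            exact Or.inr (Or.inr (hsub z hz))
          · have hadj2 : G.Adj x c2 := hv (by simpa using h.symm) (by simpa using h2)
              (Ne.symm hc2)
            obtain ⟨w', hsub, hnv⟩ := ih (q.length + 1)
              (by simp [Walk.length_cons] at hlen ⊢; omega) (Walk.cons hadj2 q) rfl hx hy
            refine ⟨w', fun z hz => ?_, hnv⟩
            have := hsub z hz
            simp only [Walk.support_cons, List.mem_cons] at this ⊢
            tauto
      · obtain ⟨p', hsub, hnv⟩ := ih p.length (by simp [Walk.length_cons] at hlen ⊢; omega)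
          p rfl hc hy
        refine ⟨Walk.cons h p', fun z hz => ?_, ?_⟩
        · simp only [Walk.support_cons, List.mem_cons] at hz ⊢
          rcases hz with rfl | hz
          · exact Or.inl rfl
          · exact Or.inr (hsub z hz)
        · simp only [Walk.support_cons, List.mem_cons]
          push_neg
          exact ⟨Ne.symm hx, hnv⟩

noncomputable def induceInduceIso (G : SimpleGraph V) (A : Set V) (B : Set ↥A) :
    (G.induce A).induce B ≃g G.induce (Subtype.val '' B) where
  toEquiv := Equiv.Set.image _ B Subtype.val_injective
  map_rel_iff' := by
    intro a b
    simp [Equiv.Set.image, Equiv.Set.imageOfInjOn]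

lemma connected_compl_union_singleton [Fintype V] {d : ℕ} (hconn : IsDConnected d G)
    {v : V} (hv : Simplicial G v) (hbig : d + 2 ≤ Fintype.card V)
    {S : Set V} (hS : S.ncard < d) :
    (G.induce ((S ∪ {v})ᶜ)).Connected := by
  classical
  have hne : ((S ∪ {v})ᶜ : Set V).Nonempty := by
    rw [Set.nonempty_compl]
    intro hu
    have hle := Set.ncard_union_le S ({v} : Set V)
    rw [hu, Set.ncard_univ, Nat.card_eq_fintype_card] at hle
    simp only [Set.ncard_singleton] at hle
    omega
  rw [connected_iff]
  refine ⟨?_, hne.to_subtype⟩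
  rintro ⟨x, hx⟩ ⟨y, hy⟩
  rw [Set.mem_compl_iff, Set.mem_union] at hx hy
  push_neg at hx hy
  obtain ⟨hxS, hxv⟩ := hx
  obtain ⟨hyS, hyv⟩ := hy
  have hcon := (hconn.2 S hS).preconnected
  obtain ⟨w, hw⟩ := exists_walk_of_induce_reachable (hcon ⟨x, hxS⟩ ⟨y, hyS⟩)
  obtain ⟨w', hsub, hnv⟩ := walk_avoid hv w.length w rfl (by simpa using hxv)
    (by simpa using hyv)
  exact reachable_induce_of_walk w'
    (fun z hz => by
      rw [Set.mem_compl_iff, Set.mem_union]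
      push_neg
      exact ⟨hw z (hsub z hz), by rintro rfl; exact hnv hz⟩) _ _

lemma dconn_delete [Fintype V] [DecidableEq V] {d : ℕ} (hconn : IsDConnected d G) {v : V}
    (hv : Simplicial G v) (hbig : d + 2 ≤ Fintype.card V) :
    IsDConnected d (G.induce ({v}ᶜ : Set V)) := by
  have hcard : Fintype.card ↥({v}ᶜ : Set V) = Fintype.card V - 1 := by
    rw [Fintype.card_compl_set, Set.card_singleton]
  constructor
  · omega
  · intro S' hS'
    rw [(induceInduceIso G ({v}ᶜ : Set V) (S'ᶜ)).connected_iff]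
    have hset : (Subtype.val '' (S'ᶜ : Set ↥({v}ᶜ : Set V))) =
        ((Subtype.val '' S' ∪ {v})ᶜ : Set V) := by
      ext z
      simp only [Set.mem_image, Set.mem_compl_iff, Set.mem_union, Set.mem_singleton_iff]
      constructor
      · rintro ⟨⟨u, hu⟩, hnu, rfl⟩
        push_neg
        exact ⟨fun x hx hval => hnu (Subtype.ext hval ▸ hx), by simpa using hu⟩
      · intro hz
        push_neg at hz
        exact ⟨⟨z, by simpa using hz.2⟩, fun hmem => hz.1 _ hmem rfl, rfl⟩
    rw [hset]
    refine connected_compl_union_singleton hconn hv hbig ?_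
    rw [Set.ncard_image_of_injective _ Subtype.val_injective]
    exact hS' 

lemma cliqueNumAtMost_induce {m : ℕ} (h : CliqueNumAtMost G m) (s : Set V) :
    CliqueNumAtMost (G.induce s) m := by
  intro n t ht
  apply h n (t.map ⟨Subtype.val, Subtype.val_injective⟩)
  constructor
  · intro x hx y hy hxy
    simp only [Finset.coe_map, Set.mem_image, Finset.mem_coe, Function.Embedding.coeFn_mk] at hx hy
    obtain ⟨x', hx', rfl⟩ := hx
    obtain ⟨y', hy', rfl⟩ := hy
    exact ht.1 hx' hy' (fun hh => hxy (congrArg Subtype.val hh))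
  · rw [Finset.card_map]
    exact ht.2

/-! ### Geometry -/

lemma card_ne_aux {α : Type*} [Fintype α] [DecidableEq α] (a : α) :
    Fintype.card {x : α // x ≠ a} = Fintype.card α - 1 := by
  have h := Fintype.card_subtype_compl (fun x : α => x = a)
  simpa [Fintype.card_subtype_eq] using h

lemma gram_eq {d : ℕ} {ι : Type*} [DecidableEq ι] (p : ι → EuclideanSpace ℝ (Fin d))
    (hp : ∀ i j, i ≠ j → dist (p i) (p j) = 1) {i0 i j : ι} (hi : i ≠ i0) (hj : j ≠ i0) :
    ⟪p i - p i0, p j - p i0⟫ = if i = j then 1 else 1/2 := by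
  have h1 : ‖p i - p i0‖ = 1 := by rw [← dist_eq_norm]; exact hp _ _ hi
  have h2 : ‖p j - p i0‖ = 1 := by rw [← dist_eq_norm]; exact hp _ _ hj
  by_cases hij : i = j
  · subst hij
    rw [if_pos rfl, real_inner_self_eq_norm_sq, h1]
    norm_num
  · have h3 : ‖p i - p j‖ = 1 := by rw [← dist_eq_norm]; exact hp _ _ hij
    have hexp : ‖(p i - p i0) - (p j - p i0)‖ = 1 := by
      rw [sub_sub_sub_cancel_right]; exact h3
    have hns := norm_sub_sq_real (p i - p i0) (p j - p i0)
    rw [hexp, h1, h2] at hns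
    rw [if_neg hij]
    nlinarith [hns]

lemma affineIndep_of_pairwise_unit {d : ℕ} {ι : Type*} [Fintype ι]
    (p : ι → EuclideanSpace ℝ (Fin d)) (hp : ∀ i j, i ≠ j → dist (p i) (p j) = 1) :
    AffineIndependent ℝ p := by
  classical
  cases isEmpty_or_nonempty ι with
  | inl h => exact affineIndependent_of_subsingleton ℝ p
  | inr h =>
  obtain ⟨i0⟩ := h
  rw [affineIndependent_iff_linearIndependent_vsub ℝ p i0, Fintype.linearIndependent_iff]
  intro g hg
  have hsum0 : (∑ i : {x // x ≠ i0}, g i • (p ↑i - p i0)) = 0 := by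
    simpa [vsub_eq_sub] using hg
  have hinner : ∀ i j : {x // x ≠ i0}, ⟪p ↑i - p i0, p ↑j - p i0⟫ =
      if i = j then 1 else 1/2 := by
    intro i j
    rw [gram_eq p hp i.2 j.2]
    by_cases hij : i = j
    · simp [hij]
    · rw [if_neg (fun h : (i:ι) = (j:ι) => hij (Subtype.ext h)), if_neg hij]
  have hexpand : (0:ℝ) =
      ∑ i : {x // x ≠ i0}, ∑ j : {x // x ≠ i0},
        g i * (g j * (if i = j then 1 else 1/2)) := by
    calc (0:ℝ) = ⟪(0 : EuclideanSpace ℝ (Fin d)), 0⟫ := by simp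
    _ = ⟪∑ i : {x // x ≠ i0}, g i • (p ↑i - p i0),
          ∑ j : {x // x ≠ i0}, g j • (p ↑j - p i0)⟫ := by rw [hsum0]
    _ = ∑ i : {x // x ≠ i0}, ∑ j : {x // x ≠ i0},
          g i * (g j * ⟪p ↑i - p i0, p ↑j - p i0⟫) := by
        rw [sum_inner]
        refine Finset.sum_congr rfl fun i _ => ?_
        rw [real_inner_smul_left, inner_sum]
        rw [Finset.mul_sum]
        refine Finset.sum_congr rfl fun j _ => ?_
        rw [real_inner_smul_right]
    _ = _ := by
        refine Finset.sum_congr rfl fun i _ => Finset.sum_congr rfl fun j _ => ?_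
        rw [hinner]
  have hsplit : ∀ i j : {x // x ≠ i0}, g i * (g j * (if i = j then (1:ℝ) else 1/2)) =
      g i * g j / 2 + (if i = j then g i * g j / 2 else 0) := by
    intro i j; by_cases h : i = j <;> simp [h] <;> ring
  simp_rw [hsplit, Finset.sum_add_distrib] at hexpand
  have e1 : ∑ i : {x // x ≠ i0}, ∑ j : {x // x ≠ i0}, g i * g j / 2 =
      (∑ i : {x // x ≠ i0}, g i)^2 / 2 := by
    rw [sq, Finset.sum_mul_sum]
    simp_rw [Finset.sum_div]
  have e2 : ∑ i : {x // x ≠ i0}, (∑ j : {x // x ≠ i0}, if i = j then g i * g j / 2 else 0) =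
      ∑ i : {x // x ≠ i0}, (g i)^2 / 2 := by
    refine Finset.sum_congr rfl fun i _ => ?_
    rw [Finset.sum_ite_eq]
    simp [sq]
  rw [e1, e2] at hexpand
  have hsqsum : ∑ i : {x // x ≠ i0}, (g i)^2 = 0 := by
    have hnn : (0:ℝ) ≤ ∑ i : {x // x ≠ i0}, (g i)^2 :=
      Finset.sum_nonneg fun i _ => sq_nonneg _
    have hs2 : ∑ i : {x // x ≠ i0}, (g i)^2 / 2 = (∑ i : {x // x ≠ i0}, (g i)^2) / 2 := by
      rw [← Finset.sum_div]
    rw [hs2] at hexpand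
    nlinarith [sq_nonneg (∑ i : {x // x ≠ i0}, g i)]
  intro i
  have := (Finset.sum_eq_zero_iff_of_nonneg (fun j _ => sq_nonneg (g j))).1 hsqsum i
    (Finset.mem_univ i)
  exact pow_eq_zero_iff (by norm_num) |>.1 this

lemma cliqueNumAtMost_of_realisation [Fintype V] {d : ℕ} {ρ : V → EuclideanSpace ℝ (Fin d)}
    (hρ : IsSphereRealisation d G ρ) : CliqueNumAtMost G (d + 1) := by
  intro n s hs
  have haff : AffineIndependent ℝ (fun x : ↥s => ρ ↑x) := by
    refine affineIndep_of_pairwise_unit _ fun i j hij => ?_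
    exact hρ.1 _ _ (hs.1 (Finset.mem_coe.2 i.2) (Finset.mem_coe.2 j.2)
      (fun h => hij (Subtype.ext h)))
  have hcard := haff.card_le_finrank_succ
  have h2 : Module.finrank ℝ (vectorSpan ℝ (Set.range fun x : ↥s => ρ ↑x)) ≤ d := by
    refine le_trans (Submodule.finrank_le _) ?_
    rw [finrank_euclideanSpace_fin]
  rw [Fintype.card_coe, hs.2] at hcard
  omega

lemma sphere_three_points {d : ℕ} (hd : 1 ≤ d) {ι : Type*} [Fintype ι]
    (hι : Fintype.card ι = d) (q : ι → EuclideanSpace ℝ (Fin d))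
    (hq : AffineIndependent ℝ q) (x z y : EuclideanSpace ℝ (Fin d))
    (hx : ∀ i, dist x (q i) = 1) (hz : ∀ i, dist z (q i) = 1)
    (hy : ∀ i, dist y (q i) = 1) (hzx : z ≠ x) : y = x ∨ y = z := by
  classical
  have hne : Nonempty ι := Fintype.card_pos_iff.1 (by omega)
  obtain ⟨i0⟩ := hne
  set W : Submodule ℝ (EuclideanSpace ℝ (Fin d)) :=
    Submodule.span ℝ (Set.range fun i : {i // i ≠ i0} => q ↑i - q i0) with hW
  have hli : LinearIndependent ℝ (fun i : {i // i ≠ i0} => q ↑i - q i0) := by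
    have h := (affineIndependent_iff_linearIndependent_vsub ℝ q i0).1 hq
    simpa [vsub_eq_sub] using h
  have hWrank : Module.finrank ℝ W = d - 1 := by
    rw [hW, finrank_span_eq_card hli, card_ne_aux, hι]
  have hWo : Module.finrank ℝ (Wᗮ) = 1 := by
    have h := Submodule.finrank_add_finrank_orthogonal W
    rw [finrank_euclideanSpace_fin, hWrank] at h
    omega
  have hdiff : ∀ u w : EuclideanSpace ℝ (Fin d), (∀ i, dist u (q i) = 1) →
      (∀ i, dist w (q i) = 1) → u - w ∈ Wᗮ := by
    intro u w hu hw
    rw [Submodule.mem_orthogonal]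
    intro vv hvv
    induction hvv using Submodule.span_induction with
    | mem vv hvv =>
      obtain ⟨i, rfl⟩ := hvv
      have h1 : ‖u - q ↑i‖^2 = ‖w - q ↑i‖^2 := by
        rw [← dist_eq_norm, ← dist_eq_norm, hu, hw]
      have h2 : ‖u - q i0‖^2 = ‖w - q i0‖^2 := by
        rw [← dist_eq_norm, ← dist_eq_norm, hu, hw]
      rw [norm_sub_sq_real u (q ↑i), norm_sub_sq_real w (q ↑i)] at h1
      rw [norm_sub_sq_real u (q i0), norm_sub_sq_real w (q i0)] at h2
      rw [inner_sub_left, inner_sub_right, inner_sub_right]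
      have c1 := real_inner_comm u (q ↑i)
      have c2 := real_inner_comm w (q ↑i)
      have c3 := real_inner_comm u (q i0)
      have c4 := real_inner_comm w (q i0)
      linarith
    | zero => exact inner_zero_left _
    | add x y hx' hy' ihx ihy => rw [inner_add_left, ihx, ihy]; ring
    | smul a x hx' ihx => rw [real_inner_smul_left, ihx]; ring
  have hyx : y - x ∈ Wᗮ := hdiff y x hy hx
  have hzx' : z - x ∈ Wᗮ := hdiff z x hz hx
  have hnz : z - x ≠ 0 := sub_ne_zero.2 hzx
  have hle : Submodule.span ℝ {z - x} ≤ Wᗮ := by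
    rw [Submodule.span_singleton_le_iff_mem]; exact hzx'
  have heq : Submodule.span ℝ {z - x} = Wᗮ :=
    Submodule.eq_of_le_of_finrank_le hle (by rw [hWo, finrank_span_singleton hnz])
  rw [← heq] at hyx
  obtain ⟨t, ht⟩ := Submodule.mem_span_singleton.1 hyx
  have h0 : ‖x - q i0‖ = 1 := by rw [← dist_eq_norm]; exact hx i0
  have h1 : ‖(x - q i0) + (z - x)‖ = 1 := by
    have he : (x - q i0) + (z - x) = z - q i0 := by abel
    rw [he, ← dist_eq_norm]; exact hz i0
  have h2 : ‖(x - q i0) + t • (z - x)‖ = 1 := by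
    have he : (x - q i0) + t • (z - x) = y - q i0 := by rw [ht]; abel
    rw [he, ← dist_eq_norm]; exact hy i0
  have hnorm : ‖z - x‖ ≠ 0 := norm_ne_zero_iff.2 hnz
  have ha := norm_add_sq_real (x - q i0) (z - x)
  have hb := norm_add_sq_real (x - q i0) (t • (z - x))
  rw [h1, h0] at ha
  rw [h2, h0, real_inner_smul_right, norm_smul] at hb
  have hprod : t * (t - 1) * ‖z - x‖^2 = 0 := by
    have habs : (|t| * ‖z - x‖)^2 = t^2 * ‖z - x‖^2 := by
      rw [mul_pow, sq_abs]
    rw [Real.norm_eq_abs] at hb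
    linear_combination t * ha - hb - habs
  have hn2 : ‖z - x‖^2 ≠ 0 := pow_ne_zero _ hnorm
  have hkey := (mul_eq_zero.1 hprod).resolve_right hn2
  rcases mul_eq_zero.1 hkey with h | h
  · left
    have : y - x = 0 := by rw [← ht, h, zero_smul]
    have := sub_eq_zero.1 this
    exact this
  · right
    have ht1 : t = 1 := by linarith [sub_eq_zero.1 h]
    have : y - x = z - x := by rw [← ht, ht1, one_smul]
    exact sub_left_inj.1 this

lemma simplex_congruent {d : ℕ} {V : Type*} [Fintype V] (hcard : Fintype.card V = d + 1)
    (σ τ : V → EuclideanSpace ℝ (Fin d))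
    (hσ : ∀ v w, v ≠ w → dist (σ v) (σ w) = 1)
    (hτ : ∀ v w, v ≠ w → dist (τ v) (τ w) = 1) :
    ∃ T : EuclideanSpace ℝ (Fin d) ≃ᵢ EuclideanSpace ℝ (Fin d), τ = ⇑T ∘ σ := by
  classical
  rcases Nat.eq_zero_or_pos d with rfl | hd
  · have hss : Subsingleton (EuclideanSpace ℝ (Fin 0)) :=
      ⟨fun a b => by ext i; exact i.elim0⟩
    exact ⟨IsometryEquiv.refl _, funext fun v => Subsingleton.elim _ _⟩
  have hne : Nonempty V := Fintype.card_pos_iff.1 (by omega)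
  obtain ⟨v0⟩ := hne
  have hcι : Fintype.card {v : V // v ≠ v0} = d := by rw [card_ne_aux, hcard]; omega
  have hliσ : LinearIndependent ℝ (fun i : {v : V // v ≠ v0} => σ ↑i - σ v0) := by
    have h := (affineIndependent_iff_linearIndependent_vsub ℝ σ v0).1
      (affineIndep_of_pairwise_unit σ hσ)
    simpa [vsub_eq_sub] using h
  have hbne : Nonempty {v : V // v ≠ v0} := Fintype.card_pos_iff.1 (by omega)
  let b : Module.Basis {v : V // v ≠ v0} ℝ (EuclideanSpace ℝ (Fin d)) :=
    basisOfLinearIndependentOfCardEqFinrank hliσ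
      (by rw [hcι, finrank_euclideanSpace_fin])
  have hb : ∀ i, b i = σ ↑i - σ v0 := fun i => by
    rw [coe_basisOfLinearIndependentOfCardEqFinrank]
  let L : EuclideanSpace ℝ (Fin d) →ₗ[ℝ] EuclideanSpace ℝ (Fin d) :=
    b.constr ℝ (fun i => τ ↑i - τ v0)
  have hLb : ∀ i, L (b i) = τ ↑i - τ v0 := fun i => b.constr_basis ℝ _ i
  have hgram : ∀ i j : {v : V // v ≠ v0}, ⟪L (b i), L (b j)⟫ = ⟪b i, b j⟫ := by
    intro i j
    rw [hLb i, hLb j, hb i, hb j, gram_eq τ hτ i.2 j.2, gram_eq σ hσ i.2 j.2]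
  have hinner : ∀ α β, ⟪L α, L β⟫ = ⟪α, β⟫ := by
    intro α β
    rw [← b.sum_repr α, ← b.sum_repr β]
    rw [map_sum, map_sum]
    simp_rw [map_smul, sum_inner, inner_sum, real_inner_smul_left, real_inner_smul_right]
    refine Finset.sum_congr rfl fun i _ => Finset.sum_congr rfl fun j _ => ?_
    rw [hgram]
  let LE : EuclideanSpace ℝ (Fin d) ≃ₗᵢ[ℝ] EuclideanSpace ℝ (Fin d) :=
    (L.isometryOfInner hinner).toLinearIsometryEquiv rfl
  have hLE : ∀ xx, LE xx = L xx := fun xx => rfl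
  let T : EuclideanSpace ℝ (Fin d) ≃ᵢ EuclideanSpace ℝ (Fin d) :=
    (IsometryEquiv.constVAdd (-(σ v0))).trans
      (LE.toIsometryEquiv.trans (IsometryEquiv.constVAdd (τ v0)))
  have hTx : ∀ xx, T xx = L (xx - σ v0) + τ v0 := by
    intro xx
    show τ v0 +ᵥ (LE ((-(σ v0)) +ᵥ xx)) = L (xx - σ v0) + τ v0
    rw [vadd_eq_add, vadd_eq_add, hLE, neg_add_eq_sub, add_comm]
  refine ⟨T, funext fun v => ?_⟩
  show τ v = T (σ v)
  rw [hTx]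
  by_cases hv : v = v0
  · subst hv
    rw [sub_self, map_zero, zero_add]
  · rw [show σ v - σ v0 = σ (⟨v, hv⟩ : {v : V // v ≠ v0}) - σ v0 from rfl]
    rw [← hb ⟨v, hv⟩, hLb ⟨v, hv⟩]
    show τ v = τ ↑(⟨v, hv⟩ : {v : V // v ≠ v0}) - τ v0 + τ v0
    rw [sub_add_cancel]

/-! ### The common-neighbour lemma -/

lemma clique_subtype [Fintype V] {d : ℕ} {C : Finset V} (hC : G.IsNClique d C) {v : V}
    (hvC : v ∉ C) :
    ∃ C' : Finset ↥({v}ᶜ : Set V), (G.induce ({v}ᶜ : Set V)).IsNClique d C' ∧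
      (∀ u' : ↥({v}ᶜ : Set V), u' ∈ C' ↔ ↑u' ∈ C) := by
  classical
  refine ⟨C.subtype (· ∈ ({v}ᶜ : Set V)), ⟨?_, ?_⟩, fun u' => Finset.mem_subtype⟩
  · intro x hx y hy hxy
    rw [Finset.mem_coe, Finset.mem_subtype] at hx hy
    exact hC.1 hx hy (fun h => hxy (Subtype.ext h))
  · rw [Finset.card_subtype, Finset.filter_true_of_mem, hC.2]
    intro c hc
    simp only [Set.mem_compl_iff, Set.mem_singleton_iff]
    rintro rfl
    exact hvC hc

theorem common_neighbor {d : ℕ} (hd1 : 1 ≤ d) :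
    ∀ (n : ℕ) (V : Type u) (_ : Fintype V) (G : SimpleGraph V), Fintype.card V = n →
    IsChordal G → IsDConnected d G → CliqueNumAtMost G (d + 1) →
    ∀ C : Finset V, G.IsNClique d C →
    ∃ u, u ∉ C ∧ ∀ c ∈ C, G.Adj u c := by
  intro n
  induction n using Nat.strong_induction_on with
  | _ n ih =>
  intro V instV G hcard hch hconn hclq C hC
  classical
  have hdn : d < n := hcard ▸ hconn.1
  by_cases hbase : n = d + 1
  · have hcomp := complete_of_card_eq hconn (by omega)
    obtain ⟨u, hu⟩ : ∃ u, u ∉ C := by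
      by_contra h
      push_neg at h
      have huniv : C = Finset.univ := Finset.eq_univ_iff_forall.2 h
      have := hC.2
      rw [huniv, Finset.card_univ, hcard] at this
      omega
    exact ⟨u, hu, fun c hc => hcomp u c (fun h => hu (h ▸ hc))⟩
  · have hbig : d + 2 ≤ Fintype.card V := by omega
    have hnV : Nonempty V := Fintype.card_pos_iff.1 (by omega)
    obtain ⟨v, hv⟩ := dirac_weak hch
    have hdeg : (G.neighborSet v).ncard = d := deg_eq_of_simplicial hconn hclq hv
    by_cases hvC : v ∈ C
    · have hcsub : ((C.erase v : Finset V) : Set V) ⊆ G.neighborSet v := by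
        intro c hc
        simp only [Finset.coe_erase, Set.mem_diff, Finset.mem_coe,
          Set.mem_singleton_iff] at hc
        exact (hC.1 hc.1 hvC (fun h => hc.2 (by simpa using h))).symm
      have hccard : ((C.erase v : Finset V) : Set V).ncard = d - 1 := by
        rw [Set.ncard_coe_finset, Finset.card_erase_of_mem hvC, hC.2]
      obtain ⟨y, hyN, hyC⟩ : ∃ y ∈ G.neighborSet v, y ∉ (C.erase v : Finset V) := by
        by_contra h
        push_neg at h
        have hsub2 : G.neighborSet v ⊆ ((C.erase v : Finset V) : Set V) := fun y hy =>
          Finset.mem_coe.2 (h y hy)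
        have := Set.ncard_le_ncard hsub2 (Set.toFinite _)
        omega
      have hyv : y ≠ v := fun h => G.irrefl (h ▸ hyN)
      refine ⟨y, fun hyC2 => hyC (Finset.mem_erase.2 ⟨hyv, hyC2⟩), ?_⟩
      intro c hc
      by_cases hcv : c = v
      · subst hcv
        exact hyN.symm
      · have hcN : c ∈ G.neighborSet v := (hC.1 hc hvC hcv).symm
        have hyc : y ≠ c := by
          rintro rfl
          exact hyC (Finset.mem_erase.2 ⟨hcv, hc⟩)
        exact hv hyN hcN hyc
    · by_cases hvadj : ∀ c ∈ C, G.Adj v c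
      · exact ⟨v, hvC, hvadj⟩
      · have hconn' := dconn_delete hconn hv hbig
        have hch' := isChordal_induce hch ({v}ᶜ : Set V)
        have hclq' := cliqueNumAtMost_induce hclq ({v}ᶜ : Set V)
        have hcard' : Fintype.card ↥({v}ᶜ : Set V) = n - 1 := by
          rw [Fintype.card_compl_set, Set.card_singleton, hcard]
        obtain ⟨C', hC', hC'mem⟩ := clique_subtype hC hvC
        obtain ⟨u', hu'C, hu'adj⟩ := ih (n-1) (by omega) ↥({v}ᶜ : Set V) inferInstance
          (G.induce ({v}ᶜ : Set V)) hcard' hch' hconn' hclq' C' hC'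
        refine ⟨u'.val, fun huC => hu'C ((hC'mem u').2 huC), ?_⟩
        intro c hc
        have hcv : c ∈ ({v}ᶜ : Set V) := by
          simp only [Set.mem_compl_iff, Set.mem_singleton_iff]
          rintro rfl
          exact hvC hc
        exact hu'adj ⟨c, hcv⟩ ((hC'mem ⟨c, hcv⟩).2 hc)

/-! ### Main induction -/

theorem main_induction {d : ℕ} (hd1 : 1 ≤ d) :
    ∀ (n : ℕ) (V : Type u) (_ : Fintype V) (G : SimpleGraph V), Fintype.card V = n →
    IsChordal G → IsDConnected d G →
    ∀ ρ ρ', IsSphereRealisation d G ρ → IsSphereRealisation d G ρ' →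
      RealisationCongruent d ρ ρ' := by
  intro n
  induction n using Nat.strong_induction_on with
  | _ n ih =>
  intro V instV G hcard hch hconn ρ ρ' hρ hρ'
  classical
  have hdn : d < n := hcard ▸ hconn.1
  by_cases hbase : n = d + 1
  · exact simplex_congruent (by omega) ρ ρ'
      (fun x y hxy => hρ.1 x y (complete_of_card_eq hconn (by omega) x y hxy))
      (fun x y hxy => hρ'.1 x y (complete_of_card_eq hconn (by omega) x y hxy))
  · have hbig : d + 2 ≤ Fintype.card V := by omega
    have hnV : Nonempty V := Fintype.card_pos_iff.1 (by omega)
    obtain ⟨v, hv⟩ := dirac_weak hch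
    have hclq := cliqueNumAtMost_of_realisation (G := G) hρ
    have hdeg : (G.neighborSet v).ncard = d := deg_eq_of_simplicial hconn hclq hv
    have hconn' := dconn_delete hconn hv hbig
    have hch' := isChordal_induce hch ({v}ᶜ : Set V)
    have hcard' : Fintype.card ↥({v}ᶜ : Set V) = n - 1 := by
      rw [Fintype.card_compl_set, Set.card_singleton, hcard]
    have hρr : IsSphereRealisation d (G.induce ({v}ᶜ : Set V)) (fun x => ρ x.val) :=
      ⟨fun x y hxy => hρ.1 _ _ hxy,
       fun x y hxy hnadj => hρ.2 _ _ (fun h => hxy (Subtype.ext h)) hnadj⟩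
    have hρ'r : IsSphereRealisation d (G.induce ({v}ᶜ : Set V)) (fun x => ρ' x.val) :=
      ⟨fun x y hxy => hρ'.1 _ _ hxy,
       fun x y hxy hnadj => hρ'.2 _ _ (fun h => hxy (Subtype.ext h)) hnadj⟩
    obtain ⟨T, hT⟩ := ih (n-1) (by omega) ↥({v}ᶜ : Set V) inferInstance
      (G.induce ({v}ᶜ : Set V)) hcard' hch' hconn' _ _ hρr hρ'r
    set ρ'' : V → EuclideanSpace ℝ (Fin d) := fun w => T.symm (ρ' w) with hρ''def
    have hagree : ∀ w, w ≠ v → ρ'' w = ρ w := by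
      intro w hw
      have hfw := congrFun hT (⟨w, by simpa using hw⟩ : ↥({v}ᶜ : Set V))
      simp only [Function.comp_apply] at hfw
      rw [hρ''def]
      simp only []
      rw [hfw, IsometryEquiv.symm_apply_apply]
    have hρ''real : IsSphereRealisation d G ρ'' := by
      constructor
      · intro x y hxy
        rw [hρ''def]
        simp only [IsometryEquiv.dist_eq]
        exact hρ'.1 x y hxy
      · intro x y h1 h2
        rw [hρ''def]
        simp only [IsometryEquiv.dist_eq]
        exact hρ'.2 x y h1 h2
    set C : Finset V := (G.neighborSet v).toFinset with hCdef
    have hCmem : ∀ c, c ∈ C ↔ G.Adj v c := by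
      intro c
      rw [hCdef, Set.mem_toFinset]
      rfl
    have hCclique : G.IsNClique d C := by
      constructor
      · intro x hx y hy hxy
        rw [Finset.mem_coe, hCmem] at hx hy
        exact hv hx hy hxy
      · rw [hCdef, Set.toFinset_card]
        rw [Set.ncard_eq_toFinset_card', Set.toFinset_card] at hdeg
        exact hdeg
    have hvnC : v ∉ C := by
      rw [hCmem]
      exact G.irrefl
    obtain ⟨C', hC', hC'mem⟩ := clique_subtype hCclique hvnC
    have hclq'' := cliqueNumAtMost_induce hclq ({v}ᶜ : Set V)
    obtain ⟨u', hu'C, hu'adj⟩ := common_neighbor hd1 (n-1) ↥({v}ᶜ : Set V) inferInstance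
      (G.induce ({v}ᶜ : Set V)) hcard' hch' hconn' hclq'' C' hC'
    have huv : (u' : V) ≠ v := u'.2
    have hunadj : ¬ G.Adj v (u' : V) := by
      intro h
      exact hu'C ((hC'mem u').2 ((hCmem _).2 h))
    have huadj : ∀ c ∈ C, G.Adj (u' : V) c := by
      intro c hc
      have hcv : c ∈ ({v}ᶜ : Set V) := by
        simp only [Set.mem_compl_iff, Set.mem_singleton_iff]
        rintro rfl
        exact hvnC hc
      exact hu'adj ⟨c, hcv⟩ ((hC'mem ⟨c, hcv⟩).2 hc)
    have hCcard : Fintype.card ↥C = d := by rw [Fintype.card_coe, hCclique.2]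
    have haff : AffineIndependent ℝ (fun c : ↥C => ρ c.val) := by
      refine affineIndep_of_pairwise_unit _ fun i j hij => ?_
      exact hρ.1 _ _ (hCclique.1 (Finset.mem_coe.2 i.2) (Finset.mem_coe.2 j.2)
        (fun h => hij (Subtype.ext h)))
    have hxdist : ∀ c : ↥C, dist (ρ v) (ρ c.val) = 1 := fun c =>
      hρ.1 _ _ ((hCmem _).1 c.2)
    have hzdist : ∀ c : ↥C, dist (ρ (u' : V)) (ρ c.val) = 1 := fun c =>
      hρ.1 _ _ (huadj _ c.2)
    have hydist : ∀ c : ↥C, dist (ρ'' v) (ρ c.val) = 1 := by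
      intro c
      have hcv : (c : V) ≠ v := fun h => hvnC (h ▸ c.2)
      rw [← hagree _ hcv]
      exact hρ''real.1 _ _ ((hCmem _).1 c.2)
    have hzx : ρ (u' : V) ≠ ρ v := by
      intro h
      have h1 := hρ.2 v (u' : V) (Ne.symm huv) hunadj
      rw [h] at h1
      simp at h1
      linarith
    rcases sphere_three_points hd1 hCcard _ haff (ρ v) (ρ (u' : V)) (ρ'' v)
      hxdist hzdist hydist hzx with hyx | hyz
    · refine ⟨T, funext fun w => ?_⟩
      have hfin : ρ'' w = ρ w := by
        by_cases hw : w = v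
        · subst hw; exact hyx
        · exact hagree w hw
      have : T.symm (ρ' w) = ρ w := hfin
      calc ρ' w = T (T.symm (ρ' w)) := (T.apply_symm_apply _).symm
      _ = T (ρ w) := by rw [this]
    · exfalso
      have h1 := hρ''real.2 v (u' : V) (Ne.symm huv) hunadj
      rw [hyz, hagree _ huv] at h1
      simp at h1
      linarith

end Stmt12Aux

theorem stmt12 {V : Type*} [Fintype V] (d : ℕ) (G : SimpleGraph V)
    (hchordal : IsChordal G) (hG : IsSphereGraph d G) (hd : d ≤ 3)
    (hcard : d + 1 ≤ Fintype.card V) (hconn : IsDConnected d G) :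
    GloballySphereRigid d G := by
  rcases Nat.eq_zero_or_pos d with rfl | hd1
  · intro ρ ρ' h h'
    have : Subsingleton (EuclideanSpace ℝ (Fin 0)) :=
      ⟨fun a b => by ext i; exact i.elim0⟩
    exact ⟨IsometryEquiv.refl _, funext fun v => Subsingleton.elim _ _⟩
  · intro ρ ρ' h h'
    exact Stmt12Aux.main_induction hd1 (Fintype.card V) V ‹_› G rfl hchordal hconn ρ ρ' h h'
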